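/- Let R be a commutative ring, A a commutative group, and S ⊂ A a generating set of A. Then for each n ∈ ℤ⁺, the n-th power Iⁿ of the augmentation ideal I of R[A] is generated as an ideal by the products Δ_{s₁}⋯Δ_{s_n} with s₁,…,s_n ∈ S, where Δ_s = [s] − [0]. -/

import Mathlib

/-- The augmentation map of the group ring `R[A]`, sending `∑ r_a [a]` to `∑ r_a`. -/
noncomputable def aug (R : Type*) [CommRing R] (A : Type*) [AddCommGroup A] :
    AddMonoidAlgebra R A →ₐ[R] R :=
  (AddMonoidAlgebra.lift R R A) 1

/-- The augmentation ideal of `R[A]`, i.e. the kernel of the augmentation map. -/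
noncomputable def augIdeal (R : Type*) [CommRing R] (A : Type*) [AddCommGroup A] :
    Ideal (AddMonoidAlgebra R A) :=
  RingHom.ker (aug R A).toRingHom

section Aux
variable (R : Type*) [CommRing R] {A : Type*} [AddCommGroup A]

noncomputable def delta (a : A) : AddMonoidAlgebra R A :=
  AddMonoidAlgebra.single a (1 : R) - AddMonoidAlgebra.single (0 : A) (1 : R)

lemma aug_single (a : A) (r : R) : aug R A (AddMonoidAlgebra.single a r) = r := by
  simp [aug, AddMonoidAlgebra.lift_single]

lemma aug_delta (a : A) : aug R A (delta R a) = 0 := by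
  simp [delta, map_sub, aug_single]

lemma single_zero_one : (AddMonoidAlgebra.single (0 : A) (1 : R)) = 1 := rfl

lemma delta_add (a b : A) :
    delta R (a + b) = delta R a + delta R b + delta R a * delta R b := by
  have h : (AddMonoidAlgebra.single a (1:R)) * AddMonoidAlgebra.single b 1
      = AddMonoidAlgebra.single (a+b) 1 := by
    rw [AddMonoidAlgebra.single_mul_single, one_mul]
  simp only [delta, single_zero_one, ← h]
  ring

lemma delta_mem_span {S : Set A} (hS : AddSubgroup.closure S = ⊤) (a : A) :
    delta R a ∈ Ideal.span (delta R '' S) := by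
  have ha : a ∈ AddSubgroup.closure S := hS ▸ AddSubgroup.mem_top a
  induction ha using AddSubgroup.closure_induction with
  | mem s hs => exact Ideal.subset_span ⟨s, hs, rfl⟩
  | zero => simp [delta]
  | add x y _ _ hx hy =>
      rw [delta_add]
      exact add_mem (add_mem hx hy) (Ideal.mul_mem_right _ _ hx)
  | neg x _ hx =>
      have h0 : delta R x + delta R (-x) + delta R x * delta R (-x) = 0 := by
        rw [← delta_add]; simp [delta]
      have : delta R (-x) = -delta R x - delta R x * delta R (-x) := by
        linear_combination h0
      rw [this]
      exact sub_mem (neg_mem hx) (Ideal.mul_mem_right _ _ hx)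

lemma augIdeal_eq_span {S : Set A} (hS : AddSubgroup.closure S = ⊤) :
    augIdeal R A = Ideal.span (delta R '' S) := by
  apply le_antisymm
  · intro x hx
    have hx' : aug R A x = 0 := hx
    have h2 : (∑ a ∈ x.coeff.support, AddMonoidAlgebra.single a (x.coeff a)) = x :=
      AddMonoidAlgebra.sum_coeff_single x
    have h3 : ∑ a ∈ x.coeff.support, x.coeff a = 0 := by
      calc ∑ a ∈ x.coeff.support, x.coeff a = aug R A x := by
            conv_rhs => rw [← h2]
            rw [map_sum]
            exact Finset.sum_congr rfl fun a _ => (aug_single R a (x.coeff a)).symm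
        _ = 0 := hx'
    have hrep : x = ∑ a ∈ x.coeff.support, (x.coeff a) • delta R a := by
      have h1 : ∑ a ∈ x.coeff.support, (x.coeff a) • delta R a
          = (∑ a ∈ x.coeff.support, AddMonoidAlgebra.single a (x.coeff a))
            - ∑ a ∈ x.coeff.support, AddMonoidAlgebra.single (0 : A) (x.coeff a) := by
        rw [← Finset.sum_sub_distrib]
        refine Finset.sum_congr rfl fun a _ => ?_
        simp [delta, smul_sub, AddMonoidAlgebra.smul_single']
      have h4 : ∑ a ∈ x.coeff.support, AddMonoidAlgebra.single (0 : A) (x.coeff a)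
          = AddMonoidAlgebra.single (0 : A) (∑ a ∈ x.coeff.support, x.coeff a) :=
        (map_sum (AddMonoidAlgebra.singleAddHom (0 : A)) _ _).symm
      rw [h1, h2, h4, h3]
      simp
    rw [hrep]
    exact Submodule.sum_mem _ fun a _ =>
      Submodule.smul_of_tower_mem _ (x.coeff a) (delta_mem_span R hS a)
  · rw [Ideal.span_le]
    rintro _ ⟨s, _, rfl⟩
    show aug R A (delta R s) = 0
    exact aug_delta R s

open Pointwise in
def Tset (S : Set A) (n : ℕ) : Set (AddMonoidAlgebra R A) :=
  {x | ∃ l : List A, l.length = n ∧ (∀ s ∈ l, s ∈ S) ∧ x = (l.map (delta R)).prod}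

lemma Tset_zero (S : Set A) : Tset R S 0 = {1} := by
  ext x
  constructor
  · rintro ⟨l, hlen, -, rfl⟩
    rw [List.length_eq_zero_iff] at hlen
    simp [hlen]
  · rintro rfl
    exact ⟨[], rfl, by simp, by simp⟩

lemma Tset_one (S : Set A) : Tset R S 1 = delta R '' S := by
  ext x
  constructor
  · rintro ⟨l, hlen, hmem, rfl⟩
    rw [List.length_eq_one_iff] at hlen
    obtain ⟨a, rfl⟩ := hlen
    exact ⟨a, hmem a (by simp), by simp⟩
  · rintro ⟨s, hs, rfl⟩
    exact ⟨[s], rfl, by simpa using hs, by simp⟩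

open Pointwise in
lemma Tset_succ (S : Set A) (n : ℕ) :
    Tset R S (n + 1) = Tset R S 1 * Tset R S n := by
  ext x
  constructor
  · rintro ⟨l, hlen, hmem, rfl⟩
    cases l with
    | nil => simp at hlen
    | cons a t =>
        refine ⟨delta R a, ⟨[a], rfl, by simpa using hmem a (by simp), by simp⟩,
          (t.map (delta R)).prod, ⟨t, by simpa using hlen,
            fun s hs => hmem s (List.mem_cons_of_mem a hs), rfl⟩, ?_⟩
        simp
  · rintro ⟨u, ⟨l1, hl1, hm1, rfl⟩, v, ⟨l2, hl2, hm2, rfl⟩, rfl⟩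
    refine ⟨l1 ++ l2, by simp [hl1, hl2, Nat.add_comm], ?_, by simp⟩
    intro s hs
    rcases List.mem_append.mp hs with h | h
    exacts [hm1 s h, hm2 s h]

open Pointwise in
lemma span_Tset {S : Set A} (hS : AddSubgroup.closure S = ⊤) (n : ℕ) :
    augIdeal R A ^ n = Ideal.span (Tset R S n) := by
  induction n with
  | zero => rw [pow_zero, Tset_zero, Ideal.span_singleton_one, Ideal.one_eq_top]
  | succ n ih =>
      rw [pow_succ', ih, Tset_succ, ← Ideal.span_mul_span',
        augIdeal_eq_span R hS, ← Tset_one R S]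

end Aux

/-- If `S` generates `A` as a group, then for `n ≥ 1` the `n`-th power of the augmentation
ideal of `R[A]` is generated as an ideal by the `n`-fold products `Δ_{s₁} ⋯ Δ_{s_n}`
with `s₁, …, s_n ∈ S`, where `Δ_s = [s] - [0]`. -/
theorem augIdeal_pow_span (R : Type*) [CommRing R] (A : Type*) [AddCommGroup A]
    (S : Set A) (hS : AddSubgroup.closure S = ⊤) (n : ℕ) (hn : 1 ≤ n) :
    augIdeal R A ^ n
      = Ideal.span {x : AddMonoidAlgebra R A |
          ∃ l : List A, l.length = n ∧ (∀ s ∈ l, s ∈ S) ∧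
            x = (l.map fun s => AddMonoidAlgebra.single s (1 : R)
                  - AddMonoidAlgebra.single (0 : A) (1 : R)).prod} := by
  exact span_Tset R hS n
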